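/- Let 0 < K_1 ≤ K_2 and set k_1 = ln K_1. Then for every ξ ∈ ℂ with Im ξ > 0, the integral ∫_ℝ e^{−i·x·ξ}·(K_1 − e^x)_+·(K_2 − e^x)_+ dx converges absolutely and equals K_1 · (e^{−i·k_1·ξ}/(iξ − 1)) · (K_2/(iξ) − K_1/(iξ − 2)). (Equation (prodPuts): the Fourier transform in log-price of the product of two put payoffs.) -/

import Mathlib

open MeasureTheory Set

lemma rexp_integrableOn_Iic {c : ℝ} (hc : 0 < c) (k : ℝ) :
    IntegrableOn (fun x : ℝ => Real.exp (c * x)) (Iic k) := by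
  rw [← (Measure.measurePreserving_neg (volume : Measure ℝ)).integrableOn_comp_preimage
      (Homeomorph.neg ℝ).measurableEmbedding]
  simp only [Function.comp_def, neg_preimage, neg_Iic, mul_neg, ← neg_mul]
  rw [integrableOn_Ici_iff_integrableOn_Ioi]
  exact exp_neg_integrableOn_Ioi (-k) hc

lemma cexp_integrableOn_Iic {a : ℂ} (ha : 0 < a.re) (k : ℝ) :
    IntegrableOn (fun x : ℝ => Complex.exp (a * x)) (Iic k) := by
  refine Integrable.mono' (rexp_integrableOn_Iic ha k) ?_ ?_
  · exact (Complex.continuous_exp.comp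
      (continuous_const.mul Complex.continuous_ofReal)).aestronglyMeasurable
  · filter_upwards with x
    rw [Complex.norm_exp]
    simp [Complex.mul_re]

lemma cexp_integral_Iic {a : ℂ} (ha : 0 < a.re) (k : ℝ) :
    ∫ x in Iic k, Complex.exp (a * x) = Complex.exp (a * k) / a := by
  have ha0 : a ≠ 0 := fun h => by simp [h] at ha
  have hderiv : ∀ x : ℝ, HasDerivAt (fun x : ℝ => Complex.exp (a * x) / a)
      (Complex.exp (a * x)) x := by
    intro x
    have h1 : HasDerivAt (fun x : ℝ => a * (x : ℂ)) a x := by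
      simpa using (Complex.ofRealCLM.hasDerivAt (x := x)).const_mul a
    have h2 := (h1.cexp).div_const a
    simpa [mul_div_assoc, mul_div_cancel_right₀ _ ha0] using h2
  have htend : Filter.Tendsto (fun x : ℝ => Complex.exp (a * x) / a) Filter.atBot (nhds 0) := by
    rw [tendsto_zero_iff_norm_tendsto_zero]
    have : (fun x : ℝ => ‖Complex.exp (a * x) / a‖) = fun x => Real.exp (a.re * x) / ‖a‖ := by
      funext x
      rw [norm_div, Complex.norm_exp]
      simp [Complex.mul_re]
    rw [this]
    simpa [Function.comp_def] using
      (Real.tendsto_exp_atBot.comp (Filter.tendsto_id.const_mul_atBot ha)).div_const ‖a‖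
  have := integral_Iic_of_hasDerivAt_of_tendsto (f := fun x : ℝ => Complex.exp (a * x) / a)
    (f' := fun x : ℝ => Complex.exp (a * x)) (a := k) (m := 0)
    (Continuous.continuousWithinAt (by continuity))
    (fun x _ => hderiv x) (cexp_integrableOn_Iic ha k) htend
  simpa using this

/-- Equation (prodPuts): the Fourier transform in log-price of the product of two put payoffs. -/
theorem stmt_7 (K₁ K₂ : ℝ) (hK₁ : 0 < K₁) (hK₁₂ : K₁ ≤ K₂) :
    ∀ ξ : ℂ, 0 < ξ.im →
      Integrable (fun x : ℝ =>
        Complex.exp (-(Complex.I * x * ξ)) *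
          ((max (K₁ - Real.exp x) 0 : ℝ) : ℂ) * ((max (K₂ - Real.exp x) 0 : ℝ) : ℂ)) ∧
      (∫ x : ℝ, Complex.exp (-(Complex.I * x * ξ)) *
          ((max (K₁ - Real.exp x) 0 : ℝ) : ℂ) * ((max (K₂ - Real.exp x) 0 : ℝ) : ℂ))
        = (K₁ : ℂ) * (Complex.exp (-(Complex.I * (Real.log K₁) * ξ)) / (Complex.I * ξ - 1)) *
            ((K₂ : ℂ) / (Complex.I * ξ) - (K₁ : ℂ) / (Complex.I * ξ - 2)) := by
  intro ξ hξ
  set k : ℝ := Real.log K₁ with hk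
  set a : ℂ := -(Complex.I * ξ) with hadef
  have ha : 0 < a.re := by
    simpa [hadef, Complex.mul_re] using hξ
  have ha1 : 0 < (a + 1).re := by simp [Complex.add_re]; positivity
  have ha2 : 0 < (a + 2).re := by simp [Complex.add_re]; positivity
  have ha0 : a ≠ 0 := fun h => by simp [h] at ha
  have ha10 : a + 1 ≠ 0 := fun h => by simp [h] at ha1
  have ha20 : a + 2 ≠ 0 := fun h => by simp [h] at ha2
  set g : ℝ → ℂ := fun x =>
    (K₁ : ℂ) * K₂ * Complex.exp (a * x) - ((K₁ : ℂ) + K₂) * Complex.exp ((a + 1) * x)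
      + Complex.exp ((a + 2) * x) with hg
  have hfun : (fun x : ℝ =>
      Complex.exp (-(Complex.I * x * ξ)) *
        ((max (K₁ - Real.exp x) 0 : ℝ) : ℂ) * ((max (K₂ - Real.exp x) 0 : ℝ) : ℂ))
      = Set.indicator (Iio k) g := by
    funext x
    by_cases hx : x < k
    · rw [indicator_of_mem (mem_Iio.mpr hx)]
      have he1 : Real.exp x < K₁ := by
        rw [← Real.exp_log hK₁]; exact Real.exp_lt_exp.mpr hx
      have he2 : Real.exp x < K₂ := lt_of_lt_of_le he1 hK₁₂
      rw [max_eq_left (by linarith), max_eq_left (by linarith)]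
      have e0 : -(Complex.I * x * ξ) = a * x := by rw [hadef]; ring
      have e1 : Complex.exp ((a + 1) * x) = Complex.exp (a * x) * Real.exp x := by
        rw [add_mul, one_mul, Complex.exp_add, Complex.ofReal_exp]
      have e2 : Complex.exp ((a + 2) * x)
          = Complex.exp (a * x) * (Real.exp x * Real.exp x) := by
        rw [add_mul, Complex.exp_add, show ((2 : ℂ) * x) = x + x by ring, Complex.exp_add,
          Complex.ofReal_exp]
      show _ = (K₁ : ℂ) * K₂ * Complex.exp (a * x) - ((K₁ : ℂ) + K₂) * Complex.exp ((a + 1) * x)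
        + Complex.exp ((a + 2) * x)
      rw [e0, e1, e2]
      push_cast
      ring
    · rw [indicator_of_notMem (by simpa using hx)]
      have : K₁ ≤ Real.exp x := by
        rw [← Real.exp_log hK₁]; exact Real.exp_le_exp.mpr (not_lt.mp hx)
      rw [max_eq_right (by linarith)]
      simp
  have hInt : IntegrableOn g (Iio k) := by
    refine IntegrableOn.mono_set ?_ Iio_subset_Iic_self
    exact (((cexp_integrableOn_Iic ha k).const_mul _).sub
      ((cexp_integrableOn_Iic ha1 k).const_mul _)).add (cexp_integrableOn_Iic ha2 k)
  constructor
  · rw [hfun]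
    exact (integrable_indicator_iff measurableSet_Iio).mpr hInt
  · rw [hfun, integral_indicator measurableSet_Iio, ← integral_Iic_eq_integral_Iio]
    have i1 : Integrable (fun x : ℝ => (K₁ : ℂ) * K₂ * Complex.exp (a * x))
        (volume.restrict (Iic k)) := (cexp_integrableOn_Iic ha k).const_mul _
    have i2 : Integrable (fun x : ℝ => ((K₁ : ℂ) + K₂) * Complex.exp ((a + 1) * x))
        (volume.restrict (Iic k)) := (cexp_integrableOn_Iic ha1 k).const_mul _
    have i3 : Integrable (fun x : ℝ => Complex.exp ((a + 2) * x))
        (volume.restrict (Iic k)) := cexp_integrableOn_Iic ha2 k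
    have hsplit : (∫ x in Iic k, g x)
        = (K₁ : ℂ) * K₂ * (∫ x in Iic k, Complex.exp (a * x))
          - ((K₁ : ℂ) + K₂) * (∫ x in Iic k, Complex.exp ((a + 1) * x))
          + ∫ x in Iic k, Complex.exp ((a + 2) * x) := by
      simp only [hg]
      have i12 := i1.sub i2
      rw [Pi.sub_def] at i12
      rw [integral_add i12 i3, integral_sub i1 i2, integral_const_mul, integral_const_mul]
    rw [hsplit, cexp_integral_Iic ha, cexp_integral_Iic ha1, cexp_integral_Iic ha2]
    have hKc : ((K₁ : ℝ) : ℂ) = Complex.exp (k : ℂ) := by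
      rw [← Complex.ofReal_exp, hk, Real.exp_log hK₁]
    have e1 : Complex.exp ((a + 1) * k) = Complex.exp (a * k) * K₁ := by
      rw [add_mul, one_mul, Complex.exp_add, hKc]
    have e2 : Complex.exp ((a + 2) * k) = Complex.exp (a * k) * (K₁ * K₁) := by
      rw [add_mul, Complex.exp_add, show ((2 : ℂ) * k) = k + k by ring, Complex.exp_add, hKc]
    have e0 : -(Complex.I * (k : ℂ) * ξ) = a * k := by rw [hadef]; ring
    have hIξ : Complex.I * ξ = -a := by rw [hadef]; ring
    rw [e0, e1, e2, hIξ]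
    have h1 : -a - 1 ≠ 0 := by intro h; apply ha10; linear_combination -h
    have h2 : -a - 2 ≠ 0 := by intro h; apply ha20; linear_combination -h
    have h3 : -a ≠ 0 := neg_ne_zero.mpr ha0
    field_simp
    ring
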